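/- Let (Ω, μ) be a probability space, let σ_0, …, σ_{N−1} : Ω → Ω be measurable maps whose ranges are pairwise essentially disjoint and cover Ω up to null sets, satisfying μ(σ_i(Y)) = ρ_i μ(Y) for all measurable Y ⊂ Ω, where ρ_i > 0 and ∑_i ρ_i = 1, and let σ : Ω → Ω be the measurable N-to-1 map determined (up to null sets) by σ ∘ σ_i = id for each i. Let S_0, …, S_{N−1} be bounded operators on L²(Ω, μ) satisfying the Cuntz relations S_i* S_j = δ_{ij}·1 and ∑_{i=0}^{N−1} S_i S_i* = 1. Then the following are equivalent: (i) there exist functions m_i ∈ L^∞(Ω, μ) such that (S_i ξ)(x) = m_i(x) ξ(σ(x)) for all ξ ∈ L²(Ω, μ) and almost every x ∈ Ω; (ii) ∑_{i=0}^{N−1} S_i M_f S_i* = M_{f∘σ} for all f ∈ L^∞(Ω, μ), where M_f denotes the operator of multiplication by f on L²(Ω, μ). Furthermore, when these conditions hold, m_i = S_i 1 (the image of the constant function 1). -/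

import Mathlib

open MeasureTheory ENNReal

noncomputable section
namespace CuntzAux

variable {Ω : Type*} [MeasurableSpace Ω] {μ : Measure Ω} {N : ℕ}



lemma meas_image_le (σi : Fin N → Ω → Ω) (ρ : Fin N → ℝ≥0∞)
    (hscale : ∀ i, ∀ Y : Set Ω, MeasurableSet Y → μ (σi i '' Y) = ρ i * μ Y)
    (i : Fin N) (A : Set Ω) : μ (σi i '' A) ≤ ρ i * μ A := by
  calc μ (σi i '' A) ≤ μ (σi i '' toMeasurable μ A) :=
        measure_mono (Set.image_mono (subset_toMeasurable μ A))
    _ = ρ i * μ (toMeasurable μ A) := hscale i _ (measurableSet_toMeasurable μ A)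
    _ = ρ i * μ A := by rw [measure_toMeasurable]

lemma sigma_measurePreserving [IsProbabilityMeasure μ]
    (σi : Fin N → Ω → Ω) (σ : Ω → Ω) (hσ_meas : Measurable σ)
    (ρ : Fin N → ℝ≥0∞) (hρ_sum : ∑ i, ρ i = 1)
    (hcover : ∀ᵐ x ∂μ, ∃ i, σi i (σ x) = x)
    (hscale : ∀ i, ∀ Y : Set Ω, MeasurableSet Y → μ (σi i '' Y) = ρ i * μ Y) :
    MeasurePreserving σ μ μ := by
  have key : ∀ E : Set Ω, MeasurableSet E → μ (σ ⁻¹' E) ≤ μ E := by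
    intro E _
    have hsub : σ ⁻¹' E ⊆ {x | ¬ ∃ i, σi i (σ x) = x} ∪ ⋃ i, σi i '' E := by
      intro x hx
      by_cases h : ∃ i, σi i (σ x) = x
      · obtain ⟨i, hi⟩ := h
        exact Or.inr (Set.mem_iUnion.2 ⟨i, ⟨σ x, hx, hi⟩⟩)
      · exact Or.inl h
    have hbad : μ {x | ¬ ∃ i, σi i (σ x) = x} = 0 := by
      simpa [ae_iff] using hcover
    calc μ (σ ⁻¹' E) ≤ μ ({x | ¬ ∃ i, σi i (σ x) = x} ∪ ⋃ i, σi i '' E) :=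
          measure_mono hsub
      _ ≤ μ {x | ¬ ∃ i, σi i (σ x) = x} + μ (⋃ i, σi i '' E) := measure_union_le _ _
      _ ≤ 0 + ∑ i, μ (σi i '' E) := by
          gcongr
          · exact le_of_eq hbad
          · exact measure_iUnion_fintype_le μ _
      _ ≤ ∑ i, ρ i * μ E := by
          rw [zero_add]
          exact Finset.sum_le_sum fun i _ => meas_image_le σi ρ hscale i E
      _ = μ E := by rw [← Finset.sum_mul, hρ_sum, one_mul]
  have key' : ∀ E : Set Ω, MeasurableSet E → μ (σ ⁻¹' E) = μ E := by
    intro E hE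
    refine le_antisymm (key E hE) ?_
    have h1 : μ (σ ⁻¹' E) + μ (σ ⁻¹' Eᶜ) = 1 := by
      rw [Set.preimage_compl, measure_add_measure_compl (hσ_meas hE), measure_univ]
    have h2 : μ E + μ Eᶜ = 1 := by rw [measure_add_measure_compl hE, measure_univ]
    have h3 : μ (σ ⁻¹' Eᶜ) ≤ μ Eᶜ := key Eᶜ hE.compl
    by_contra hlt
    push_neg at hlt
    have : μ (σ ⁻¹' E) + μ (σ ⁻¹' Eᶜ) < μ E + μ Eᶜ :=
      ENNReal.add_lt_add_of_lt_of_le (measure_ne_top μ _) hlt h3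
    rw [h1, h2] at this
    exact lt_irrefl _ this
  exact ⟨hσ_meas, Measure.ext fun E hE => by
    rw [Measure.map_apply hσ_meas hE]; exact key' E hE⟩




lemma decomp [IsProbabilityMeasure μ]
    (σi : Fin N → Ω → Ω) (hσi_meas : ∀ i, Measurable (σi i))
    (σ : Ω → Ω)
    (ρ : Fin N → ℝ≥0∞) (hρ_sum : ∑ i, ρ i = 1)
    (hcover : ∀ᵐ x ∂μ, ∃ i, σi i (σ x) = x)
    (hscale : ∀ i, ∀ Y : Set Ω, MeasurableSet Y → μ (σi i '' Y) = ρ i * μ Y) :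
    μ = ∑ i, ρ i • Measure.map (σi i) μ := by
  have happ : ∀ (E : Set Ω), MeasurableSet E →
      (∑ i, ρ i • Measure.map (σi i) μ) E = ∑ i, μ (E ∩ Set.range (σi i)) := by
    intro E hE
    rw [Measure.coe_finset_sum, Finset.sum_apply]
    refine Finset.sum_congr rfl fun i _ => ?_
    rw [Measure.smul_apply, smul_eq_mul, Measure.map_apply (hσi_meas i) hE,
      ← hscale i _ ((hσi_meas i) hE), Set.image_preimage_eq_inter_range]
  have hle : ∀ (E : Set Ω), MeasurableSet E → μ E ≤ (∑ i, ρ i • Measure.map (σi i) μ) E := by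
    intro E hE
    rw [happ E hE]
    have hbad : μ {x | ¬ ∃ i, σi i (σ x) = x} = 0 := by simpa [ae_iff] using hcover
    have hsub : E ⊆ {x | ¬ ∃ i, σi i (σ x) = x} ∪ ⋃ i, E ∩ Set.range (σi i) := by
      intro x hx
      by_cases h : ∃ i, σi i (σ x) = x
      · obtain ⟨i, hi⟩ := h
        exact Or.inr (Set.mem_iUnion.2 ⟨i, hx, ⟨σ x, hi⟩⟩)
      · exact Or.inl h
    calc μ E ≤ μ ({x | ¬ ∃ i, σi i (σ x) = x} ∪ ⋃ i, E ∩ Set.range (σi i)) :=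
          measure_mono hsub
      _ ≤ μ {x | ¬ ∃ i, σi i (σ x) = x} + μ (⋃ i, E ∩ Set.range (σi i)) := measure_union_le _ _
      _ ≤ 0 + ∑ i, μ (E ∩ Set.range (σi i)) := by
          gcongr
          · exact le_of_eq hbad
          · exact measure_iUnion_fintype_le μ _
      _ = ∑ i, μ (E ∩ Set.range (σi i)) := zero_add _
  have huniv : (∑ i, ρ i • Measure.map (σi i) μ) Set.univ = 1 := by
    rw [Measure.coe_finset_sum, Finset.sum_apply]
    have : ∀ i : Fin N, (ρ i • Measure.map (σi i) μ) Set.univ = ρ i := by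
      intro i
      rw [Measure.smul_apply, smul_eq_mul, Measure.map_apply (hσi_meas i) MeasurableSet.univ]
      simp
    simp only [this]
    exact hρ_sum
  refine Measure.ext fun E hE => ?_
  set ν := ∑ i, ρ i • Measure.map (σi i) μ with hν
  refine le_antisymm (hle E hE) ?_
  have h1 : ν E + ν Eᶜ = 1 := by rw [measure_add_measure_compl hE, huniv]
  have h2 : μ E + μ Eᶜ = 1 := by rw [measure_add_measure_compl hE, measure_univ]
  by_contra hlt
  push_neg at hlt
  have hfin : μ Eᶜ ≠ ⊤ := measure_ne_top μ _
  have : μ E + μ Eᶜ < ν E + ν Eᶜ :=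
    ENNReal.add_lt_add_of_lt_of_le hfin hlt (hle Eᶜ hE.compl)
  rw [h1, h2] at this
  exact lt_irrefl _ this

lemma lintegral_decomp [IsProbabilityMeasure μ]
    (σi : Fin N → Ω → Ω) (hσi_meas : ∀ i, Measurable (σi i))
    (σ : Ω → Ω)
    (ρ : Fin N → ℝ≥0∞) (hρ_sum : ∑ i, ρ i = 1)
    (hcover : ∀ᵐ x ∂μ, ∃ i, σi i (σ x) = x)
    (hscale : ∀ i, ∀ Y : Set Ω, MeasurableSet Y → μ (σi i '' Y) = ρ i * μ Y)
    (g : Ω → ℝ≥0∞) (hg : Measurable g) :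
    ∫⁻ x, g x ∂μ = ∑ i, ρ i * ∫⁻ y, g (σi i y) ∂μ := by
  conv_lhs => rw [decomp σi hσi_meas σ ρ hρ_sum hcover hscale]
  rw [lintegral_finset_sum_measure]
  refine Finset.sum_congr rfl fun i _ => ?_
  rw [lintegral_smul_measure, lintegral_map hg (hσi_meas i), smul_eq_mul]

lemma sigmai_qmp [IsProbabilityMeasure μ]
    (σi : Fin N → Ω → Ω) (hσi_meas : ∀ i, Measurable (σi i))
    (σ : Ω → Ω)
    (ρ : Fin N → ℝ≥0∞) (hρ_pos : ∀ i, 0 < ρ i) (hρ_sum : ∑ i, ρ i = 1)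
    (hcover : ∀ᵐ x ∂μ, ∃ i, σi i (σ x) = x)
    (hscale : ∀ i, ∀ Y : Set Ω, MeasurableSet Y → μ (σi i '' Y) = ρ i * μ Y)
    (i : Fin N) : Measure.QuasiMeasurePreserving (σi i) μ μ := by
  refine ⟨hσi_meas i, Measure.AbsolutelyContinuous.mk fun E hE hE0 => ?_⟩
  have := decomp σi hσi_meas σ ρ hρ_sum hcover hscale
  have hle : ρ i * μ (σi i ⁻¹' E) ≤ μ E := by
    conv_rhs => rw [this]
    rw [Measure.coe_finset_sum, Finset.sum_apply]
    have : (ρ i • Measure.map (σi i) μ) E = ρ i * μ (σi i ⁻¹' E) := by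
      rw [Measure.smul_apply, smul_eq_mul, Measure.map_apply (hσi_meas i) hE]
    rw [← this]
    exact Finset.single_le_sum (f := fun j => (ρ j • Measure.map (σi j) μ) E)
      (fun j _ => zero_le) (Finset.mem_univ i)
  rw [hE0] at hle
  rw [Measure.map_apply (hσi_meas i) hE]
  have := le_zero_iff.mp hle
  rcases mul_eq_zero.mp this with h | h
  · exact absurd h (hρ_pos i).ne'
  · exact h




lemma ae_bound [IsProbabilityMeasure μ]
    (σi : Fin N → Ω → Ω) (hσi_meas : ∀ i, Measurable (σi i))
    (σ : Ω → Ω) (hσ_meas : Measurable σ)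
    (ρ : Fin N → ℝ≥0∞) (hρ_pos : ∀ i, 0 < ρ i) (hρ_sum : ∑ i, ρ i = 1)
    (hcover : ∀ᵐ x ∂μ, ∃ i, σi i (σ x) = x)
    (hinv : ∀ i, ∀ᵐ x ∂μ, σ (σi i x) = x)
    (hmp : MeasurePreserving σ μ μ)
    (hdecomp : ∀ g : Ω → ℝ≥0∞, Measurable g →
      ∫⁻ x, g x ∂μ = ∑ i, ρ i * ∫⁻ y, g (σi i y) ∂μ)
    (w : Ω → ℝ≥0∞) (hw : Measurable w)
    (hkey : ∀ E : Set Ω, MeasurableSet E → ∫⁻ x in σ ⁻¹' E, w x ∂μ = μ E) :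
    ∀ᵐ x ∂μ, w x ≤ ∑ i, (ρ i)⁻¹ := by
  -- step 1 : map σ (μ.withDensity w) = μ
  have hmap : Measure.map σ (μ.withDensity w) = μ := by
    refine Measure.ext fun E hE => ?_
    rw [Measure.map_apply hσ_meas hE, withDensity_apply _ (hσ_meas hE)]
    exact hkey E hE
  -- step 2 : ∀ measurable g, ∫⁻ (g∘σ) * w = ∫⁻ g
  have hstep2 : ∀ g : Ω → ℝ≥0∞, Measurable g →
      ∫⁻ x, g (σ x) * w x ∂μ = ∫⁻ x, g x ∂μ := by
    intro g hg
    conv_rhs => rw [← hmap]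
    rw [lintegral_map hg hσ_meas,
      lintegral_withDensity_eq_lintegral_mul μ hw
        (show Measurable fun a => g (σ a) from hg.comp hσ_meas)]
    simp only [Pi.mul_apply, Function.comp]
    exact lintegral_congr fun x => mul_comm _ _
  -- step 3 : ∀ measurable g, ∫⁻ g * h = ∫⁻ g where h y = ∑ i, ρ i * w (σi i y)
  set h : Ω → ℝ≥0∞ := fun y => ∑ i, ρ i * w (σi i y) with hh
  have hhmeas : Measurable h := by
    apply Finset.measurable_sum
    intro i _
    exact (hw.comp (hσi_meas i)).const_mul _
  have hstep3 : ∀ g : Ω → ℝ≥0∞, Measurable g →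
      ∫⁻ x, g x * h x ∂μ = ∫⁻ x, g x ∂μ := by
    intro g hg
    have e1 : ∫⁻ x, g (σ x) * w x ∂μ
        = ∑ i, ρ i * ∫⁻ y, g (σ (σi i y)) * w (σi i y) ∂μ :=
      hdecomp _ ((hg.comp hσ_meas).mul hw)
    have e2 : ∀ i : Fin N, ∫⁻ y, g (σ (σi i y)) * w (σi i y) ∂μ
        = ∫⁻ y, g y * w (σi i y) ∂μ := by
      intro i
      refine lintegral_congr_ae ?_
      filter_upwards [hinv i] with y hy
      rw [hy]
    have e3 : ∫⁻ x, g x * h x ∂μ = ∑ i, ρ i * ∫⁻ y, g y * w (σi i y) ∂μ := by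
      have expand : ∀ x, g x * h x = ∑ i, ρ i * (g x * w (σi i x)) := by
        intro x
        rw [hh, Finset.mul_sum]
        exact Finset.sum_congr rfl fun i _ => by ring
      calc ∫⁻ x, g x * h x ∂μ = ∫⁻ x, ∑ i, ρ i * (g x * w (σi i x)) ∂μ :=
            lintegral_congr expand
        _ = ∑ i, ∫⁻ x, ρ i * (g x * w (σi i x)) ∂μ :=
            lintegral_finset_sum _ fun i _ => ((hg.mul (hw.comp (hσi_meas i))).const_mul _)
        _ = ∑ i, ρ i * ∫⁻ y, g y * w (σi i y) ∂μ := by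
            refine Finset.sum_congr rfl fun i _ => ?_
            rw [lintegral_const_mul _ (show Measurable fun x => g x * w (σi i x) from hg.mul (hw.comp (hσi_meas i)))]
    rw [e3]
    rw [show (∑ i, ρ i * ∫⁻ y, g y * w (σi i y) ∂μ)
        = ∑ i, ρ i * ∫⁻ y, g (σ (σi i y)) * w (σi i y) ∂μ from
      Finset.sum_congr rfl fun i _ => by rw [e2 i]]
    rw [← e1]
    exact hstep2 g hg
  -- step 4 : h = 1 a.e.
  have hae1 : h =ᵐ[μ] fun _ => (1 : ℝ≥0∞) := by
    refine ae_eq_of_forall_setLIntegral_eq_of_sigmaFinite hhmeas measurable_one ?_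
    intro s hs _
    have := hstep3 (s.indicator fun _ => (1 : ℝ≥0∞)) (measurable_one.indicator hs)
    have lhs_eq : ∫⁻ x, s.indicator (fun _ => (1:ℝ≥0∞)) x * h x ∂μ = ∫⁻ x in s, h x ∂μ := by
      rw [← lintegral_indicator hs]
      refine lintegral_congr fun x => ?_
      by_cases hx : x ∈ s <;> simp [Set.indicator, hx]
    have rhs_eq : ∫⁻ x, s.indicator (fun _ => (1:ℝ≥0∞)) x ∂μ = ∫⁻ x in s, (1:ℝ≥0∞) ∂μ := by
      rw [← lintegral_indicator hs]
    rw [lhs_eq, rhs_eq] at this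
    exact this
  -- step 5 : for each i, a.e. y, w (σi i y) ≤ (ρ i)⁻¹ ≤ C
  set C : ℝ≥0∞ := ∑ i, (ρ i)⁻¹ with hC
  have hstep5 : ∀ i : Fin N, ∀ᵐ y ∂μ, w (σi i y) ≤ C := by
    intro i
    filter_upwards [hae1] with y hy
    have hterm : ρ i * w (σi i y) ≤ 1 := by
      rw [← hy]
      exact Finset.single_le_sum (f := fun j => ρ j * w (σi j y)) (fun j _ => zero_le)
        (Finset.mem_univ i)
    have hρtop : ρ i ≠ ⊤ := by
      intro htop
      have : ρ i ≤ 1 := hρ_sum ▸ Finset.single_le_sum (f := ρ) (fun j _ => zero_le)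
        (Finset.mem_univ i)
      rw [htop] at this
      exact absurd this (by simp)
    have hterm' : w (σi i y) * ρ i ≤ 1 := by rwa [mul_comm] at hterm
    have : w (σi i y) ≤ (ρ i)⁻¹ := by
      rw [← one_div]
      exact (ENNReal.le_div_iff_mul_le (Or.inl (hρ_pos i).ne') (Or.inl hρtop)).mpr hterm'
    exact this.trans (Finset.single_le_sum (f := fun j => (ρ j)⁻¹) (fun j _ => zero_le)
      (Finset.mem_univ i))
  -- step 6/7 : conclude
  set bad : Set Ω := {x | ¬ w x ≤ C} with hbaddef
  have hbad_meas : MeasurableSet bad := by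
    have : bad = {x | C < w x} := by
      ext x; simp only [hbaddef, Set.mem_setOf_eq, not_le]
    rw [this]
    exact measurableSet_lt measurable_const hw
  have hbadi : ∀ i : Fin N, μ (σi i ⁻¹' bad) = 0 := by
    intro i
    have := hstep5 i
    rw [ae_iff] at this
    simpa [hbaddef, Set.preimage] using this
  have hfinal : μ bad = 0 := by
    have hbadcov : μ {x | ¬ ∃ i, σi i (σ x) = x} = 0 := by simpa [ae_iff] using hcover
    have hsub : bad ⊆ {x | ¬ ∃ i, σi i (σ x) = x} ∪ ⋃ i, σ ⁻¹' (σi i ⁻¹' bad) := by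
      intro x hx
      by_cases hex : ∃ i, σi i (σ x) = x
      · obtain ⟨i, hi⟩ := hex
        refine Or.inr (Set.mem_iUnion.2 ⟨i, ?_⟩)
        simp only [Set.mem_preimage]
        rw [hi]
        exact hx
      · exact Or.inl hex
    refine le_antisymm ?_ (zero_le)
    calc μ bad ≤ μ {x | ¬ ∃ i, σi i (σ x) = x} + μ (⋃ i, σ ⁻¹' (σi i ⁻¹' bad)) :=
          le_trans (measure_mono hsub) (measure_union_le _ _)
      _ ≤ 0 + ∑ i, μ (σ ⁻¹' (σi i ⁻¹' bad)) := by
          gcongr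
          · exact le_of_eq hbadcov
          · exact measure_iUnion_fintype_le μ _
      _ = 0 := by
          rw [zero_add]
          refine Finset.sum_eq_zero fun i _ => ?_
          rw [hmp.measure_preimage ((hσi_meas i) hbad_meas).nullMeasurableSet]
          exact hbadi i
  rw [ae_iff]
  exact hfinal




lemma memℒp_mul {f : Ω → ℂ} (hf : MemLp f ⊤ μ) (ξ : Lp ℂ 2 μ) :
    MemLp (fun x => f x * ξ x) 2 μ := by
  have := (Lp.memLp ξ).smul (r := 2) hf
  exact this

/-- Multiplication by an `L^∞` function as a continuous linear map on `L²`. -/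
def mulCLM (f : Ω → ℂ) (hf : MemLp f ⊤ μ) : Lp ℂ 2 μ →L[ℂ] Lp ℂ 2 μ :=
  LinearMap.mkContinuous
    { toFun := fun ξ => (memℒp_mul hf ξ).toLp _
      map_add' := by
        intro ξ η
        refine Lp.ext ?_
        filter_upwards [MemLp.coeFn_toLp (memℒp_mul hf (ξ + η)),
          MemLp.coeFn_toLp (memℒp_mul hf ξ), MemLp.coeFn_toLp (memℒp_mul hf η),
          Lp.coeFn_add ξ η,
          Lp.coeFn_add ((memℒp_mul hf ξ).toLp _) ((memℒp_mul hf η).toLp _)] with x h1 h2 h3 h4 h5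
        rw [h1, h5, Pi.add_apply, h2, h3, h4, Pi.add_apply, mul_add]
      map_smul' := by
        intro c ξ
        refine Lp.ext ?_
        filter_upwards [MemLp.coeFn_toLp (memℒp_mul hf (c • ξ)),
          MemLp.coeFn_toLp (memℒp_mul hf ξ), Lp.coeFn_smul c ξ,
          Lp.coeFn_smul c ((memℒp_mul hf ξ).toLp _)] with x h1 h2 h3 h4
        rw [h1, RingHom.id_apply, h4, Pi.smul_apply, h2, h3, Pi.smul_apply, smul_eq_mul,
          smul_eq_mul]
        ring }
    (eLpNorm f ⊤ μ).toReal
    (by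
      intro ξ
      simp only [LinearMap.coe_mk, AddHom.coe_mk]
      rw [Lp.norm_toLp, Lp.norm_def]
      have hbound : eLpNorm (fun x => f x * ξ x) 2 μ ≤ eLpNorm f ⊤ μ * eLpNorm ξ 2 μ := by
        have := eLpNorm_smul_le_eLpNorm_top_mul_eLpNorm (μ := μ) 2 (Lp.aestronglyMeasurable ξ) f
        convert this using 2 <;> rfl
      calc (eLpNorm (fun x => f x * ξ x) 2 μ).toReal
          ≤ (eLpNorm f ⊤ μ * eLpNorm ξ 2 μ).toReal := by
            apply ENNReal.toReal_mono
            · exact ENNReal.mul_ne_top hf.eLpNorm_lt_top.ne (Lp.eLpNorm_lt_top ξ).ne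
            · exact hbound
        _ = (eLpNorm f ⊤ μ).toReal * (eLpNorm ξ 2 μ).toReal := ENNReal.toReal_mul)

lemma mulCLM_apply (f : Ω → ℂ) (hf : MemLp f ⊤ μ) (ξ : Lp ℂ 2 μ) :
    ⇑(mulCLM f hf ξ) =ᵐ[μ] fun x => f x * ξ x :=
  MemLp.coeFn_toLp (memℒp_mul hf ξ)




lemma coeFn_finset_sum {ι : Type*} (s : Finset ι) (ζ : ι → Lp ℂ 2 μ) :
    ⇑(∑ i ∈ s, ζ i) =ᵐ[μ] fun x => ∑ i ∈ s, ζ i x := by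
  classical
  induction s using Finset.induction_on with
  | empty => simp only [Finset.sum_empty]; exact Lp.coeFn_zero ℂ 2 μ
  | insert a s' hnotmem ih =>
    rw [Finset.sum_insert hnotmem]
    filter_upwards [Lp.coeFn_add (ζ a) (∑ i ∈ s', ζ i), ih] with x h1 h2
    rw [h1, Pi.add_apply, h2, Finset.sum_insert hnotmem]

lemma forward [IsProbabilityMeasure μ]
    (σ : Ω → Ω)
    (hqmp : Measure.QuasiMeasurePreserving σ μ μ)
    (S : Fin N → Lp ℂ 2 μ →L[ℂ] Lp ℂ 2 μ)
    (hCuntz₂ : ∑ i, (S i).comp (ContinuousLinearMap.adjoint (S i))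
        = (1 : Lp ℂ 2 μ →L[ℂ] Lp ℂ 2 μ))
    (m : Fin N → Ω → ℂ)
    (hm : ∀ i, MemLp (m i) ⊤ μ ∧
        ∀ ξ : Lp ℂ 2 μ, ⇑(S i ξ) =ᵐ[μ] fun x => m i x * ξ (σ x))
    (f : Ω → ℂ) (hf : MemLp f ⊤ μ)
    (Mf Mfσ : Lp ℂ 2 μ →L[ℂ] Lp ℂ 2 μ)
    (hMf : ∀ ξ : Lp ℂ 2 μ, ⇑(Mf ξ) =ᵐ[μ] fun x => f x * ξ x)
    (hMfσ : ∀ ξ : Lp ℂ 2 μ, ⇑(Mfσ ξ) =ᵐ[μ] fun x => f (σ x) * ξ x) :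
    ∑ i, (S i).comp (Mf.comp (ContinuousLinearMap.adjoint (S i))) = Mfσ := by
  refine ContinuousLinearMap.ext fun ξ => ?_
  refine Lp.ext ?_
  have happly : (∑ i, (S i).comp (Mf.comp (ContinuousLinearMap.adjoint (S i)))) ξ
      = ∑ i, S i (Mf (ContinuousLinearMap.adjoint (S i) ξ)) := by
    rw [ContinuousLinearMap.sum_apply]
    rfl
  rw [happly]
  -- pointwise description of each summand
  have hterm : ∀ i : Fin N, ⇑(S i (Mf (ContinuousLinearMap.adjoint (S i) ξ)))
      =ᵐ[μ] fun x => f (σ x) * (S i (ContinuousLinearMap.adjoint (S i) ξ)) x := by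
    intro i
    set η := ContinuousLinearMap.adjoint (S i) ξ with hη
    have h1 := (hm i).2 (Mf η)
    have h2 : (fun x => (Mf η) (σ x)) =ᵐ[μ] fun x => f (σ x) * η (σ x) := by
      have := hqmp.ae_eq (hMf η)
      exact this
    have h3 := (hm i).2 η
    filter_upwards [h1, h2, h3] with x e1 e2 e3
    rw [e1, e2, e3]
    ring
  have hsum1 : ⇑(∑ i, S i (Mf (ContinuousLinearMap.adjoint (S i) ξ)))
      =ᵐ[μ] fun x => ∑ i, (S i (Mf (ContinuousLinearMap.adjoint (S i) ξ))) x :=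
    coeFn_finset_sum _ _
  have hsum2 : ⇑(∑ i, S i (ContinuousLinearMap.adjoint (S i) ξ))
      =ᵐ[μ] fun x => ∑ i, (S i (ContinuousLinearMap.adjoint (S i) ξ)) x :=
    coeFn_finset_sum _ _
  have hid : (∑ i, S i (ContinuousLinearMap.adjoint (S i) ξ)) = ξ := by
    have := congrArg (fun T => T ξ) hCuntz₂
    simpa [ContinuousLinearMap.sum_apply] using this
  rw [hid] at hsum2
  have hall : ∀ᵐ x ∂μ, ∀ i : Fin N,
      (S i (Mf (ContinuousLinearMap.adjoint (S i) ξ))) x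
        = f (σ x) * (S i (ContinuousLinearMap.adjoint (S i) ξ)) x := by
    rw [ae_all_iff]
    exact fun i => hterm i
  filter_upwards [hsum1, hsum2, hall, hMfσ ξ] with x a b c d
  rw [a]
  calc (∑ i, (S i (Mf (ContinuousLinearMap.adjoint (S i) ξ))) x)
      = ∑ i, f (σ x) * (S i (ContinuousLinearMap.adjoint (S i) ξ)) x :=
        Finset.sum_congr rfl fun i _ => c i
    _ = f (σ x) * ∑ i, (S i (ContinuousLinearMap.adjoint (S i) ξ)) x := by
        rw [Finset.mul_sum]
    _ = f (σ x) * ξ x := by rw [← b]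
    _ = (Mfσ ξ) x := d.symm


lemma norm_S_apply {S : Lp ℂ 2 μ →L[ℂ] Lp ℂ 2 μ}
    (h : (ContinuousLinearMap.adjoint S).comp S = 1) (ξ : Lp ℂ 2 μ) : ‖S ξ‖ = ‖ξ‖ := by
  have h1 : ContinuousLinearMap.adjoint S (S ξ) = ξ := by
    have := congrArg (fun T => T ξ) h
    simpa using this
  have h2 : (inner ℂ (S ξ) (S ξ) : ℂ) = inner ℂ ξ ξ := by
    rw [← ContinuousLinearMap.adjoint_inner_left, h1]
  have h3 : ‖S ξ‖ ^ 2 = ‖ξ‖ ^ 2 := by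
    have e1 : (inner ℂ (S ξ) (S ξ) : ℂ) = (‖S ξ‖ : ℂ) ^ 2 := inner_self_eq_norm_sq_to_K _
    have e2 : (inner ℂ ξ ξ : ℂ) = (‖ξ‖ : ℂ) ^ 2 := inner_self_eq_norm_sq_to_K _
    rw [e1, e2] at h2
    exact_mod_cast h2
  have h4 : 0 ≤ ‖S ξ‖ := norm_nonneg _
  have h5 : 0 ≤ ‖ξ‖ := norm_nonneg _
  nlinarith [h3, h4, h5]

lemma eLpNorm_two_eq_lintegral (g : Ω → ℂ) :
    eLpNorm g 2 μ = (∫⁻ x, (‖g x‖₊ : ℝ≥0∞) ^ (2 : ℝ) ∂μ) ^ (1/2 : ℝ) := by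
  rw [eLpNorm_eq_lintegral_rpow_enorm_toReal (by norm_num) (by norm_num)]
  norm_num
  simp only [enorm_eq_nnnorm]

lemma reverse [IsProbabilityMeasure μ]
    (σi : Fin N → Ω → Ω) (hσi_meas : ∀ i, Measurable (σi i))
    (σ : Ω → Ω) (hσ_meas : Measurable σ)
    (ρ : Fin N → ℝ≥0∞) (hρ_pos : ∀ i, 0 < ρ i) (hρ_sum : ∑ i, ρ i = 1)
    (hcover : ∀ᵐ x ∂μ, ∃ i, σi i (σ x) = x)
    (hinv : ∀ i, ∀ᵐ x ∂μ, σ (σi i x) = x)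
    (hscale : ∀ i, ∀ Y : Set Ω, MeasurableSet Y → μ (σi i '' Y) = ρ i * μ Y)
    (S : Fin N → Lp ℂ 2 μ →L[ℂ] Lp ℂ 2 μ)
    (hCuntz₁ : ∀ i j, (ContinuousLinearMap.adjoint (S i)).comp (S j)
        = if i = j then (1 : Lp ℂ 2 μ →L[ℂ] Lp ℂ 2 μ) else 0)
    (hyp : ∀ f : Ω → ℂ, MemLp f ⊤ μ →
        ∀ Mf Mfσ : Lp ℂ 2 μ →L[ℂ] Lp ℂ 2 μ,
          (∀ ξ : Lp ℂ 2 μ, ⇑(Mf ξ) =ᵐ[μ] fun x => f x * ξ x) →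
          (∀ ξ : Lp ℂ 2 μ, ⇑(Mfσ ξ) =ᵐ[μ] fun x => f (σ x) * ξ x) →
          ∑ i, (S i).comp (Mf.comp (ContinuousLinearMap.adjoint (S i))) = Mfσ)
    (j : Fin N) :
    MemLp (⇑(S j ((MeasureTheory.memLp_const (1 : ℂ)).toLp fun _ => (1 : ℂ)))) ⊤ μ ∧
    ∀ ξ : Lp ℂ 2 μ, ⇑(S j ξ) =ᵐ[μ]
      fun x => (S j ((MeasureTheory.memLp_const (1 : ℂ)).toLp fun _ => (1 : ℂ))) x * ξ (σ x) := by
  have hmp : MeasurePreserving σ μ μ :=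
    sigma_measurePreserving σi σ hσ_meas ρ hρ_sum hcover hscale
  have hqmp : Measure.QuasiMeasurePreserving σ μ μ := hmp.quasiMeasurePreserving
  set one1 : Lp ℂ 2 μ := (MeasureTheory.memLp_const (1 : ℂ)).toLp fun _ => (1 : ℂ) with hone1
  set mj : Ω → ℂ := ⇑(S j one1) with hmj
  -- Step 1: action of `S j` on (L²-classes of) bounded functions
  have step1 : ∀ (f : Ω → ℂ) (hf : MemLp f ⊤ μ),
      ⇑(S j ((hf.mono_exponent le_top).toLp f)) =ᵐ[μ] fun x => f (σ x) * mj x := by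
    intro f hf
    have hfσ : MemLp (fun x => f (σ x)) ⊤ μ := hf.comp_measurePreserving hmp
    have opEq := hyp f hf (mulCLM f hf) (mulCLM _ hfσ)
      (mulCLM_apply f hf) (mulCLM_apply _ hfσ)
    have comp : (mulCLM _ hfσ).comp (S j) = (S j).comp (mulCLM f hf) := by
      rw [← opEq, ContinuousLinearMap.finset_sum_comp]
      rw [Finset.sum_eq_single j]
      · rw [ContinuousLinearMap.comp_assoc, ContinuousLinearMap.comp_assoc, hCuntz₁ j j,
          if_pos rfl, ContinuousLinearMap.one_def, ContinuousLinearMap.comp_id]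
      · intro i _ hij
        rw [ContinuousLinearMap.comp_assoc, ContinuousLinearMap.comp_assoc, hCuntz₁ i j,
          if_neg hij, ContinuousLinearMap.comp_zero, ContinuousLinearMap.comp_zero]
      · intro habs
        exact absurd (Finset.mem_univ j) habs
    have h1 : mulCLM f hf one1 = (hf.mono_exponent le_top).toLp f := by
      refine Lp.ext ?_
      filter_upwards [mulCLM_apply f hf one1, MemLp.coeFn_toLp (memLp_const (1:ℂ)),
        MemLp.coeFn_toLp (hf.mono_exponent (le_top : 2 ≤ (⊤ : ℝ≥0∞)))] with x e1 e2 e3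
      rw [e1, e3, hone1, e2, mul_one]
    have h2 : S j ((hf.mono_exponent le_top).toLp f) = mulCLM _ hfσ (S j one1) := by
      rw [← h1]
      have := congrArg (fun T => T one1) comp
      simpa using this.symm
    rw [h2]
    exact mulCLM_apply _ hfσ (S j one1)
  -- Step 2: boundedness of mj
  have hmjsm : StronglyMeasurable mj := Lp.stronglyMeasurable _
  set w : Ω → ℝ≥0∞ := fun x => (‖mj x‖₊ : ℝ≥0∞) ^ (2:ℝ) with hw_def
  have hw : Measurable w := hmjsm.measurable.nnnorm.coe_nnreal_ennreal.pow_const _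
  have hkey : ∀ E : Set Ω, MeasurableSet E → ∫⁻ x in σ ⁻¹' E, w x ∂μ = μ E := by
    intro E hE
    set f : Ω → ℂ := E.indicator fun _ => (1:ℂ) with hf_def
    have hfsm : StronglyMeasurable f := (stronglyMeasurable_const.indicator hE)
    have hf : MemLp f ⊤ μ := by
      refine memLp_top_of_bound hfsm.aestronglyMeasurable 1 (Filter.Eventually.of_forall ?_)
      intro x
      rw [hf_def]
      by_cases hx : x ∈ E
      · rw [Set.indicator_of_mem hx]; simp
      · rw [Set.indicator_of_notMem hx]; simp
    set ζ : Lp ℂ 2 μ := (hf.mono_exponent le_top).toLp f with hζ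
    have hnorm : ‖S j ζ‖ = ‖ζ‖ := norm_S_apply (by simpa using hCuntz₁ j j) ζ
    have heq : eLpNorm (⇑(S j ζ)) 2 μ = eLpNorm (⇑ζ) 2 μ := by
      rw [← ENNReal.toReal_eq_toReal_iff' (Lp.eLpNorm_ne_top _) (Lp.eLpNorm_ne_top _)]
      rw [← Lp.norm_def, ← Lp.norm_def]
      exact hnorm
    have heq2 : eLpNorm (fun x => f (σ x) * mj x) 2 μ = eLpNorm f 2 μ := by
      rw [← eLpNorm_congr_ae (step1 f hf), ← eLpNorm_congr_ae
        (MemLp.coeFn_toLp (hf.mono_exponent (le_top : 2 ≤ (⊤ : ℝ≥0∞))))]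
      exact heq
    have hlint : ∫⁻ x, (‖f (σ x) * mj x‖₊ : ℝ≥0∞) ^ (2:ℝ) ∂μ
        = ∫⁻ x, (‖f x‖₊ : ℝ≥0∞) ^ (2:ℝ) ∂μ := by
      have := heq2
      rw [eLpNorm_two_eq_lintegral, eLpNorm_two_eq_lintegral] at this
      exact ENNReal.rpow_left_injective (by norm_num : (1/2 : ℝ) ≠ 0) this
    have hL : ∫⁻ x, (‖f (σ x) * mj x‖₊ : ℝ≥0∞) ^ (2:ℝ) ∂μ = ∫⁻ x in σ ⁻¹' E, w x ∂μ := by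
      rw [← lintegral_indicator (hσ_meas hE)]
      refine lintegral_congr fun x => ?_
      by_cases hx : σ x ∈ E
      · have hfx : f (σ x) = 1 := by rw [hf_def]; exact Set.indicator_of_mem hx _
        rw [hfx, one_mul, Set.indicator_of_mem (show x ∈ σ ⁻¹' E from hx)]
      · have hfx : f (σ x) = 0 := by rw [hf_def]; exact Set.indicator_of_notMem hx _
        rw [hfx, zero_mul, Set.indicator_of_notMem (show x ∉ σ ⁻¹' E from hx),
          nnnorm_zero, ENNReal.coe_zero, ENNReal.zero_rpow_of_pos (by norm_num)]
    have hR : ∫⁻ x, (‖f x‖₊ : ℝ≥0∞) ^ (2:ℝ) ∂μ = μ E := by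
      have hpt : ∀ x, (‖f x‖₊ : ℝ≥0∞) ^ (2:ℝ) = E.indicator (fun _ => (1:ℝ≥0∞)) x := by
        intro x
        rw [hf_def]
        by_cases hx : x ∈ E
        · rw [Set.indicator_of_mem hx, Set.indicator_of_mem hx]; simp
        · rw [Set.indicator_of_notMem hx, Set.indicator_of_notMem hx, nnnorm_zero,
            ENNReal.coe_zero, ENNReal.zero_rpow_of_pos (by norm_num)]
      rw [lintegral_congr hpt, lintegral_indicator hE]
      simp
    rw [← hL, hlint, hR]
  have hdecomp := lintegral_decomp σi hσi_meas σ ρ hρ_sum hcover hscale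
  have hbound := ae_bound σi hσi_meas σ hσ_meas ρ hρ_pos hρ_sum hcover hinv hmp hdecomp w hw hkey
  set C : ℝ≥0∞ := ∑ i, (ρ i)⁻¹ with hC
  have hCtop : C ≠ ⊤ := by
    refine (ENNReal.sum_lt_top.mpr fun i _ => ?_).ne
    rw [ENNReal.inv_lt_top]
    exact hρ_pos i
  have hCr : (C ^ (1/2 : ℝ)) ≠ ⊤ := ENNReal.rpow_ne_top_of_nonneg (by norm_num) hCtop
  have step2 : MemLp mj ⊤ μ := by
    refine memLp_top_of_bound hmjsm.aestronglyMeasurable ((C ^ (1/2:ℝ)).toReal) ?_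
    filter_upwards [hbound] with x hx
    have h1 : (‖mj x‖₊ : ℝ≥0∞) ≤ C ^ (1/2:ℝ) := by
      have e : (‖mj x‖₊ : ℝ≥0∞) = (w x) ^ (1/2:ℝ) := by
        rw [hw_def]
        rw [← ENNReal.rpow_mul]
        norm_num
      rw [e]
      exact ENNReal.rpow_le_rpow hx (by norm_num)
    calc ‖mj x‖ = ((‖mj x‖₊ : ℝ≥0∞)).toReal := by simp
      _ ≤ (C ^ (1/2:ℝ)).toReal := ENNReal.toReal_mono hCr h1
  refine ⟨step2, ?_⟩
  -- Step 3: density argument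
  set Mm : Lp ℂ 2 μ →L[ℂ] Lp ℂ 2 μ := mulCLM mj step2 with hMm_def
  set Cσ := Lp.compMeasurePreserving (E := ℂ) (p := 2) σ hmp with hCσ_def
  set T : Lp ℂ 2 μ → Lp ℂ 2 μ := fun ξ => Mm (Cσ ξ) with hT_def
  have hTcont : Continuous T :=
    Mm.continuous.comp (Lp.isometry_compMeasurePreserving hmp).continuous
  have hdense : DenseRange ((↑) : Lp.simpleFunc ℂ 2 μ → Lp ℂ 2 μ) :=
    Lp.simpleFunc.denseRange (by norm_num)
  have hagree : (⇑(S j)) ∘ ((↑) : Lp.simpleFunc ℂ 2 μ → Lp ℂ 2 μ)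
      = T ∘ ((↑) : Lp.simpleFunc ℂ 2 μ → Lp ℂ 2 μ) := by
    funext s
    simp only [Function.comp_apply]
    set g := Lp.simpleFunc.toSimpleFunc s with hg_def
    have hgtop : MemLp (⇑g) ⊤ μ := SimpleFunc.memLp_top g μ
    have hgae : ⇑g =ᵐ[μ] ⇑(s : Lp ℂ 2 μ) := Lp.simpleFunc.toSimpleFunc_eq_toFun s
    have hs_eq : (s : Lp ℂ 2 μ) = (hgtop.mono_exponent le_top).toLp ⇑g := by
      refine Lp.ext ?_
      filter_upwards [hgae, MemLp.coeFn_toLp (hgtop.mono_exponent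
        (le_top : 2 ≤ (⊤ : ℝ≥0∞)))] with x e1 e2
      rw [e2, e1]
    rw [hs_eq]
    refine Lp.ext ?_
    have hT1 : ⇑(T ((hgtop.mono_exponent le_top).toLp ⇑g))
        =ᵐ[μ] fun x => mj x * (Cσ ((hgtop.mono_exponent le_top).toLp ⇑g)) x :=
      mulCLM_apply mj step2 _
    have hT2 : ⇑(Cσ ((hgtop.mono_exponent le_top).toLp ⇑g))
        =ᵐ[μ] (⇑((hgtop.mono_exponent le_top).toLp ⇑g)) ∘ σ :=
      Lp.coeFn_compMeasurePreserving _ hmp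
    have hT3 : (⇑((hgtop.mono_exponent le_top).toLp ⇑g)) ∘ σ =ᵐ[μ] (⇑g) ∘ σ :=
      hqmp.ae_eq (MemLp.coeFn_toLp
        (hgtop.mono_exponent (le_top : 2 ≤ (⊤ : ℝ≥0∞))))
    filter_upwards [step1 (⇑g) hgtop, hT1, hT2, hT3] with x e1 e2 e3 e4
    rw [e1, e2, e3, e4]
    simp only [Function.comp_apply]
    ring
  have hfun : ⇑(S j) = T := hdense.equalizer (S j).continuous hTcont hagree
  intro ξ
  have h1 : S j ξ = T ξ := congrFun hfun ξ
  rw [h1]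
  have h2 : ⇑(T ξ) =ᵐ[μ] fun x => mj x * (Cσ ξ) x := mulCLM_apply mj step2 _
  have h3 : ⇑(Cσ ξ) =ᵐ[μ] (⇑ξ) ∘ σ := Lp.coeFn_compMeasurePreserving _ hmp
  filter_upwards [h2, h3] with x e2 e3
  rw [e2, e3]
  rfl

end CuntzAux

/-- **Proposition 1.1.** Characterization of Cuntz families on `L²(Ω, μ)` of the form
`(Sᵢ ξ)(x) = mᵢ(x) ξ(σ(x))`. -/
theorem cuntz_family_eq_weighted_composition_iff_intertwines_multiplication
    {Ω : Type*} [MeasurableSpace Ω] (μ : Measure Ω) [IsProbabilityMeasure μ]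
    (N : ℕ) (hN : 2 ≤ N)
    -- the maps σ₀, …, σ_{N-1} and the branching map σ
    (σi : Fin N → Ω → Ω) (hσi_meas : ∀ i, Measurable (σi i))
    (σ : Ω → Ω) (hσ_meas : Measurable σ)
    -- the weights ρᵢ > 0 with ∑ ρᵢ = 1
    (ρ : Fin N → ℝ≥0∞) (hρ_pos : ∀ i, 0 < ρ i) (hρ_sum : ∑ i, ρ i = 1)
    -- the ranges of the σᵢ are essentially disjoint and cover Ω up to null sets
    (hdisj : ∀ i j, i ≠ j → μ (σi i '' Set.univ ∩ σi j '' Set.univ) = 0)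
    (hcover : ∀ᵐ x ∂μ, ∃ i, σi i (σ x) = x)
    -- σ ∘ σᵢ = id up to null sets
    (hinv : ∀ i, ∀ᵐ x ∂μ, σ (σi i x) = x)
    -- scaling of the measure: μ(σᵢ(Y)) = ρᵢ μ(Y)
    (hscale : ∀ i, ∀ Y : Set Ω, MeasurableSet Y → μ (σi i '' Y) = ρ i * μ Y)
    -- a Cuntz family S₀, …, S_{N-1} on L²(Ω, μ)
    (S : Fin N → Lp ℂ 2 μ →L[ℂ] Lp ℂ 2 μ)
    (hCuntz₁ : ∀ i j, (ContinuousLinearMap.adjoint (S i)).comp (S j)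
        = if i = j then (1 : Lp ℂ 2 μ →L[ℂ] Lp ℂ 2 μ) else 0)
    (hCuntz₂ : ∑ i, (S i).comp (ContinuousLinearMap.adjoint (S i))
        = (1 : Lp ℂ 2 μ →L[ℂ] Lp ℂ 2 μ)) :
    -- (i) ↔ (ii)
    ((∃ m : Fin N → Ω → ℂ, ∀ i, MemLp (m i) ⊤ μ ∧
        ∀ ξ : Lp ℂ 2 μ, ⇑(S i ξ) =ᵐ[μ] fun x => m i x * ξ (σ x))
      ↔
      (∀ f : Ω → ℂ, MemLp f ⊤ μ →
        ∀ Mf Mfσ : Lp ℂ 2 μ →L[ℂ] Lp ℂ 2 μ,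
          (∀ ξ : Lp ℂ 2 μ, ⇑(Mf ξ) =ᵐ[μ] fun x => f x * ξ x) →
          (∀ ξ : Lp ℂ 2 μ, ⇑(Mfσ ξ) =ᵐ[μ] fun x => f (σ x) * ξ x) →
          ∑ i, (S i).comp (Mf.comp (ContinuousLinearMap.adjoint (S i))) = Mfσ))
    ∧
    -- furthermore, in that case mᵢ = Sᵢ 1
    (∀ m : Fin N → Ω → ℂ,
      (∀ i, MemLp (m i) ⊤ μ ∧
        ∀ ξ : Lp ℂ 2 μ, ⇑(S i ξ) =ᵐ[μ] fun x => m i x * ξ (σ x)) →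
      ∀ i, m i =ᵐ[μ] ⇑(S i ((MeasureTheory.memLp_const (1 : ℂ)).toLp fun _ => (1 : ℂ)))) := by
  have hmp : MeasurePreserving σ μ μ :=
    CuntzAux.sigma_measurePreserving σi σ hσ_meas ρ hρ_sum hcover hscale
  have hqmp : Measure.QuasiMeasurePreserving σ μ μ := hmp.quasiMeasurePreserving
  constructor
  · constructor
    · rintro ⟨m, hm⟩ f hf Mf Mfσ hMf hMfσ
      exact CuntzAux.forward σ hqmp S hCuntz₂ m hm f hf Mf Mfσ hMf hMfσ
    · intro hyp
      exact ⟨fun i => ⇑(S i ((MeasureTheory.memLp_const (1 : ℂ)).toLp fun _ => (1 : ℂ))),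
        fun j => CuntzAux.reverse σi hσi_meas σ hσ_meas ρ hρ_pos hρ_sum hcover hinv hscale
          S hCuntz₁ hyp j⟩
  · intro m hm i
    have h := (hm i).2 ((MeasureTheory.memLp_const (1 : ℂ)).toLp fun _ => (1 : ℂ))
    have hone : (fun x => (((MeasureTheory.memLp_const (1 : ℂ)).toLp fun _ => (1 : ℂ)) :
        Lp ℂ 2 μ) (σ x)) =ᵐ[μ] fun _ => (1:ℂ) := by
      have h0 : ⇑((((MeasureTheory.memLp_const (1 : ℂ)).toLp fun _ => (1 : ℂ))) : Lp ℂ 2 μ)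
          =ᵐ[μ] fun _ => (1:ℂ) := MemLp.coeFn_toLp _
      have := hqmp.ae_eq h0
      simpa [Function.comp] using this
    filter_upwards [h, hone] with x e1 e2
    rw [e1, e2, mul_one]
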